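/- Let a > b ≥ 0, c > 0 with a(a−b) ≥ 1, c(b+c) ≥ 1, and bc ≤ 1. Define Δ = (a+c)(b+c)(a−b), p = (1−bc)(b+c)/Δ, q = (ac−1)(a+c)/Δ, r = (1+ab)(a−b)/Δ. Then p·a·(a − b − 1/a)² + r/c − p·a³ − q·b³ ≤ 0. -/

import Mathlib

set_option maxHeartbeats 1000000


theorem stmt8 (a b c : ℝ) (hab : b < a) (hb : 0 ≤ b) (hc : 0 < c)
    (haab : 1 ≤ a * (a - b)) (hcbc : 1 ≤ c * (b + c)) (hbc : b * c ≤ 1) :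
    let Δ := (a + c) * (b + c) * (a - b)
    let p := (1 - b * c) * (b + c) / Δ
    let q := (a * c - 1) * (a + c) / Δ
    let r := (1 + a * b) * (a - b) / Δ
    p * a * (a - b - 1 / a) ^ 2 + r / c - p * a ^ 3 - q * b ^ 3 ≤ 0 := by
  intro Δ p q r
  have ha : 0 < a := by nlinarith
  have hac : 1 ≤ a * c := by
    by_contra h
    push_neg at h
    nlinarith [mul_pos ha hc]
  have hΔ : (0:ℝ) < (a + c) * (b + c) * (a - b) := by
    apply mul_pos (mul_pos (by linarith) (by linarith)) (by linarith)
  have hΔ' : (a + c) * (b + c) * (a - b) ≠ 0 := ne_of_gt hΔ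
  set A : ℝ := a * (a - b) * (1 + a * b) with hA
  have habn : 0 ≤ a * b := mul_nonneg ha.le hb
  have hA1 : 1 ≤ A := by
    rw [hA]
    nlinarith [mul_nonneg (by nlinarith : (0:ℝ) ≤ a * (a - b)) habn]
  have hAc : b + c ≤ A * c := by
    rw [hA]
    nlinarith [mul_nonneg hb (show (0:ℝ) ≤ a * c - 1 by linarith),
      mul_nonneg hc.le
        (show (0:ℝ) ≤ a * (a - b) * (1 + a * b) - (1 + a * b) by
          nlinarith [mul_nonneg (show (0:ℝ) ≤ a * (a - b) - 1 by linarith) habn])]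
  have h1 : (0:ℝ) < 2 * c ^ 2 + b * c - 1 := by nlinarith
  have hf : c ^ 2 + b * c + A * (1 - 2 * c ^ 2 - b * c) ≤ 0 := by
    have hcf : c * (c ^ 2 + b * c + A * (1 - 2 * c ^ 2 - b * c)) ≤ 0 := by
      nlinarith [mul_nonneg (show (0:ℝ) ≤ A * c - (b + c) by linarith) h1.le,
        mul_nonneg (show (0:ℝ) ≤ b + c by linarith)
          (show (0:ℝ) ≤ c * (b + c) - 1 by linarith)]
    nlinarith [hcf, hc]
  have hid : (p * a * (a - b - 1 / a) ^ 2 + r / c - p * a ^ 3 - q * b ^ 3) *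
      ((a + c) * (b + c) * (a - b) * (a * c)) =
      (1 - b * c) * (c ^ 2 + b * c + A * (1 - 2 * c ^ 2 - b * c)) := by
    show ((1 - b * c) * (b + c) / ((a + c) * (b + c) * (a - b)) * a * (a - b - 1 / a) ^ 2 +
        (1 + a * b) * (a - b) / ((a + c) * (b + c) * (a - b)) / c -
        (1 - b * c) * (b + c) / ((a + c) * (b + c) * (a - b)) * a ^ 3 -
        (a * c - 1) * (a + c) / ((a + c) * (b + c) * (a - b)) * b ^ 3) *
        ((a + c) * (b + c) * (a - b) * (a * c)) =
      (1 - b * c) * (c ^ 2 + b * c + A * (1 - 2 * c ^ 2 - b * c))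
    rw [hA]
    have hne1 : a - b ≠ 0 := (sub_pos.mpr hab).ne'
    have hne2 : a + c ≠ 0 := (by linarith : (0:ℝ) < a + c).ne'
    have hne3 : b + c ≠ 0 := (by linarith : (0:ℝ) < b + c).ne'
    have hne4 : a ≠ 0 := ha.ne'
    have hne5 : c ≠ 0 := hc.ne'
    field_simp
    ring
  have key : (p * a * (a - b - 1 / a) ^ 2 + r / c - p * a ^ 3 - q * b ^ 3) *
      ((a + c) * (b + c) * (a - b) * (a * c)) ≤ 0 := by
    rw [hid]
    exact mul_nonpos_of_nonneg_of_nonpos (by linarith) hf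
  have hpos : (0:ℝ) < (a + c) * (b + c) * (a - b) * (a * c) :=
    mul_pos hΔ (mul_pos ha hc)
  by_contra h
  push_neg at h
  nlinarith [key, hpos, h]
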